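/- Fix real numbers ρ and ω and regard P and S as polynomials in the three variables (h, h₊, c); let P(h,h,c) and S(h,h,c) denote the polynomials obtained by substituting h₊ = h. Then in the polynomial ring ℝ[h, h₊, c] the product (h₊ − h)·P(h,h,c) divides 2(h−1)h·(S(h,h₊,c)·P(h,h,c) − S(h,h,c)·P(h,h₊,c)); equivalently, there is a unique polynomial S̃(h,h₊,c) ∈ ℝ[h,h₊,c] with (h₊−h)·P(h,h,c)·S̃(h,h₊,c) = 2(h−1)h·(S(h,h₊,c)P(h,h,c) − S(h,h,c)P(h,h₊,c)). (Uniqueness holds because P(h,h,c) is not the zero polynomial.) -/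
import Mathlib

open MvPolynomial

/-- The conjugate-flow polynomial `P(h, h₊, c)` as a polynomial in the three
variables `h = X 0`, `h₊ = X 1`, `c = X 2`, with real parameters ρ, ω. -/
noncomputable def Ppoly (ρ ω : ℝ) : MvPolynomial (Fin 3) ℝ :=
  C ω ^ 2 * X 1 ^ 2 * (X 1 - X 0) * (2 - X 1 - X 0) ^ 2 * C ρ
    + 4 * X 1 ^ 2 * (2 * X 1 ^ 2 - X 2 ^ 2 * X 1 - 4 * X 1 - X 2 ^ 2 * X 0
        + 2 * X 2 ^ 2 + 2) * C ρ
    + 4 * X 2 * C ω * (1 - X 0) * X 1 ^ 2 * (2 - X 1 - X 0) * C ρ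
    - 4 * (1 - X 1) ^ 2 * (2 * X 1 ^ 2 - X 2 ^ 2 * X 1 - X 2 ^ 2 * X 0)

/-- The flow-force conjugate-flow polynomial `S(h, h₊, c)`. -/
noncomputable def Spoly (ρ ω : ℝ) : MvPolynomial (Fin 3) ℝ :=
  C ω ^ 2 * X 1 * (X 1 - X 0) * (X 1 + 3 * X 0 - 4) * C ρ
    + 12 * X 1 * (X 1 - X 2 ^ 2 - 1) * C ρ
    + 12 * X 2 * C ω * (X 0 - 1) * X 1 * C ρ
    - 12 * (X 1 - 1) * (X 1 - X 2 ^ 2)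

/-- Substitution of `h₊ = h`, i.e. `X 1 ↦ X 0`. -/
noncomputable def diagSub : MvPolynomial (Fin 3) ℝ →ₐ[ℝ] MvPolynomial (Fin 3) ℝ :=
  aeval ![X 0, X 0, X 2]

/-- The explicit desingularized flow-force polynomial. -/
noncomputable def Stpoly (ρ ω : ℝ) : MvPolynomial (Fin 3) ℝ :=
  (6 : MvPolynomial (Fin 3) ℝ) * X 0 ^ 3 * X 1 * C ρ * C ω ^ 2
    + (-1 : MvPolynomial (Fin 3) ℝ) * X 0 ^ 2 * X 1 ^ 2 * C ρ * C ω ^ 2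
    + (-24 : MvPolynomial (Fin 3) ℝ) * X 0 ^ 2 * X 1 * X 2 * C ρ * C ω
    + (-14 : MvPolynomial (Fin 3) ℝ) * X 0 ^ 2 * X 1 * C ρ * C ω ^ 2
    + (-6 : MvPolynomial (Fin 3) ℝ) * X 0 * X 1 ^ 3 * C ρ * C ω ^ 2
    + (-12 : MvPolynomial (Fin 3) ℝ) * X 0 * X 1 ^ 2 * X 2 * C ρ * C ω
    + (10 : MvPolynomial (Fin 3) ℝ) * X 0 * X 1 ^ 2 * C ρ * C ω ^ 2
    + (-24 : MvPolynomial (Fin 3) ℝ) * X 0 * X 1 ^ 2 * C ρ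
    + (24 : MvPolynomial (Fin 3) ℝ) * X 0 * X 1 ^ 2
    + (24 : MvPolynomial (Fin 3) ℝ) * X 0 * X 1 * X 2 ^ 2 * C ρ
    + (-24 : MvPolynomial (Fin 3) ℝ) * X 0 * X 1 * X 2 ^ 2
    + (48 : MvPolynomial (Fin 3) ℝ) * X 0 * X 1 * X 2 * C ρ * C ω
    + (8 : MvPolynomial (Fin 3) ℝ) * X 0 * X 1 * C ρ * C ω ^ 2
    + (24 : MvPolynomial (Fin 3) ℝ) * X 0 * X 1 * C ρ
    + (-24 : MvPolynomial (Fin 3) ℝ) * X 0 * X 1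
    + (24 : MvPolynomial (Fin 3) ℝ) * X 0 * X 2 ^ 2
    + (-3 : MvPolynomial (Fin 3) ℝ) * X 1 ^ 4 * C ρ * C ω ^ 2
    + (12 : MvPolynomial (Fin 3) ℝ) * X 1 ^ 3 * C ρ * C ω ^ 2
    + (-24 : MvPolynomial (Fin 3) ℝ) * X 1 ^ 3 * C ρ
    + (24 : MvPolynomial (Fin 3) ℝ) * X 1 ^ 3
    + (12 : MvPolynomial (Fin 3) ℝ) * X 1 ^ 2 * X 2 ^ 2 * C ρ
    + (-12 : MvPolynomial (Fin 3) ℝ) * X 1 ^ 2 * X 2 ^ 2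
    + (12 : MvPolynomial (Fin 3) ℝ) * X 1 ^ 2 * X 2 * C ρ * C ω
    + (-12 : MvPolynomial (Fin 3) ℝ) * X 1 ^ 2 * C ρ * C ω ^ 2
    + (48 : MvPolynomial (Fin 3) ℝ) * X 1 ^ 2 * C ρ
    + (-48 : MvPolynomial (Fin 3) ℝ) * X 1 ^ 2
    + (-24 : MvPolynomial (Fin 3) ℝ) * X 1 * X 2 ^ 2 * C ρ
    + (24 : MvPolynomial (Fin 3) ℝ) * X 1 * X 2 ^ 2
    + (-24 : MvPolynomial (Fin 3) ℝ) * X 1 * X 2 * C ρ * C ω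
    + (-24 : MvPolynomial (Fin 3) ℝ) * X 1 * C ρ
    + (24 : MvPolynomial (Fin 3) ℝ) * X 1
    + (-12 : MvPolynomial (Fin 3) ℝ) * X 2 ^ 2

lemma diagSub_Ppoly (ρ ω : ℝ) :
    diagSub (Ppoly ρ ω) =
      4 * X 0 ^ 2 * (2 * X 0 ^ 2 - 2 * X 2 ^ 2 * X 0 - 4 * X 0
          + 2 * X 2 ^ 2 + 2) * C ρ
        + 4 * X 2 * C ω * (1 - X 0) * X 0 ^ 2 * (2 - 2 * X 0) * C ρ
        - 4 * (1 - X 0) ^ 2 * (2 * X 0 ^ 2 - 2 * X 2 ^ 2 * X 0) := by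
  simp only [Ppoly, diagSub, map_sub, map_add, map_mul, map_pow, map_ofNat, aeval_X,
    aeval_C, Matrix.cons_val_zero, Matrix.cons_val_one, Matrix.head_cons, Matrix.cons_val_two, Matrix.tail_cons, map_one, algebraMap_eq]
  ring

lemma diagSub_Spoly (ρ ω : ℝ) :
    diagSub (Spoly ρ ω) =
      12 * X 0 * (X 0 - X 2 ^ 2 - 1) * C ρ
        + 12 * X 2 * C ω * (X 0 - 1) * X 0 * C ρ
        - 12 * (X 0 - 1) * (X 0 - X 2 ^ 2) := by
  simp only [Spoly, diagSub, map_sub, map_add, map_mul, map_pow, map_ofNat, aeval_X,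
    aeval_C, Matrix.cons_val_zero, Matrix.cons_val_one, Matrix.head_cons, Matrix.cons_val_two, Matrix.tail_cons, map_one, algebraMap_eq]
  ring

lemma key_identity (ρ ω : ℝ) :
    (X 1 - X 0) * diagSub (Ppoly ρ ω) * Stpoly ρ ω =
      2 * (X 0 - 1) * X 0 *
        (Spoly ρ ω * diagSub (Ppoly ρ ω) - diagSub (Spoly ρ ω) * Ppoly ρ ω) := by
  rw [diagSub_Ppoly, diagSub_Spoly]
  unfold Stpoly Ppoly Spoly
  ring

lemma X_sub_ne_zero : (X 1 - X 0 : MvPolynomial (Fin 3) ℝ) ≠ 0 := by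
  intro h
  have h2 := congrArg (aeval (![0, 1, 0] : Fin 3 → ℝ)) h
  simp at h2

lemma diagSub_Ppoly_ne_zero (ρ ω : ℝ) : diagSub (Ppoly ρ ω) ≠ 0 := by
  intro h0
  have hψ : (aeval (![Polynomial.X, Polynomial.X, 1] : Fin 3 → Polynomial ℝ))
      (diagSub (Ppoly ρ ω)) =
      Polynomial.X * (Polynomial.X *
        (Polynomial.C ρ * (8 * Polynomial.X ^ 2 - 24 * Polynomial.X + 16)
          + Polynomial.C ρ * Polynomial.C ω *
            (8 - 16 * Polynomial.X + 8 * Polynomial.X ^ 2)))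
      + (Polynomial.C 8 * Polynomial.X + Polynomial.C (-24) * Polynomial.X ^ 2
          + Polynomial.C 24 * Polynomial.X ^ 3 + Polynomial.C (-8) * Polynomial.X ^ 4) := by
    rw [diagSub_Ppoly]
    simp only [map_sub, map_add, map_mul, map_pow, map_ofNat, aeval_X, aeval_C,
      Matrix.cons_val_zero, Matrix.cons_val_one, Matrix.head_cons, Matrix.cons_val_two, Matrix.tail_cons, map_one,
      Polynomial.algebraMap_eq, map_neg]
    ring
  rw [h0, map_zero] at hψ
  have hc := congrArg (fun p => Polynomial.coeff p 1) hψ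
  simp [Polynomial.coeff_X_mul, Polynomial.mul_coeff_zero, Polynomial.coeff_C_mul,
    Polynomial.coeff_X_pow] at hc

/-- Existence and uniqueness of the desingularized flow-force polynomial `S̃`:
`(h₊ − h)·P(h,h,c)` divides `2(h−1)h·(S(h,h₊,c)P(h,h,c) − S(h,h,c)P(h,h₊,c))`
in `ℝ[h,h₊,c]`; equivalently there is a unique polynomial `S̃` with
`(h₊−h)·P(h,h,c)·S̃ = 2(h−1)h·(S(h,h₊,c)P(h,h,c) − S(h,h,c)P(h,h₊,c))`. -/
theorem desingularized_flow_force_polynomial (ρ ω : ℝ) :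
    ((X 1 - X 0) * diagSub (Ppoly ρ ω) ∣
      2 * (X 0 - 1) * X 0 *
        (Spoly ρ ω * diagSub (Ppoly ρ ω) - diagSub (Spoly ρ ω) * Ppoly ρ ω)) ∧
    (∃! St : MvPolynomial (Fin 3) ℝ,
      (X 1 - X 0) * diagSub (Ppoly ρ ω) * St =
        2 * (X 0 - 1) * X 0 *
          (Spoly ρ ω * diagSub (Ppoly ρ ω) - diagSub (Spoly ρ ω) * Ppoly ρ ω)) := by
  have hA : (X 1 - X 0) * diagSub (Ppoly ρ ω) ≠ 0 :=
    mul_ne_zero X_sub_ne_zero (diagSub_Ppoly_ne_zero ρ ω)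
  refine ⟨⟨Stpoly ρ ω, (key_identity ρ ω).symm⟩, Stpoly ρ ω, key_identity ρ ω, ?_⟩
  intro y hy
  exact mul_left_cancel₀ hA (hy.trans (key_identity ρ ω).symm)
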